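/- The improper integral ∫_{0}^{∞} x^α e^{i(a x² − s x)} dx converges for all real s, a > 0, and |α| < 1. -/

import Mathlib

open Filter Real Complex MeasureTheory Topology

noncomputable def ffun (s a α : ℝ) (x : ℝ) : ℂ :=
  ((x ^ α : ℝ) : ℂ) * Complex.exp (((a * x ^ 2 - s * x : ℝ) : ℂ) * Complex.I)

noncomputable def Ffun (s a α : ℝ) (x : ℝ) : ℂ :=
  -Complex.I * ((x^α / (2*a*x - s) : ℝ) : ℂ) * Complex.exp (((a*x^2 - s*x : ℝ) : ℂ) * Complex.I)

noncomputable def hfun (s a α : ℝ) (x : ℝ) : ℂ :=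
  -Complex.I * (((α * x^(α-1) * (2*a*x-s) - x^α * (2*a)) / (2*a*x-s)^2 : ℝ) : ℂ) *
    Complex.exp (((a*x^2 - s*x : ℝ) : ℂ) * Complex.I)

lemma aux_phi (s a x : ℝ) : HasDerivAt (fun y : ℝ => a*y^2 - s*y) (2*a*x - s) x := by
  have h1 : HasDerivAt (fun y : ℝ => a*y^2 - s*y) (a*(2*x^1) - s*1) x :=
    ((hasDerivAt_pow 2 x).const_mul a).sub ((hasDerivAt_id x).const_mul s)
  convert h1 using 1; ring

lemma aux_E (s a x : ℝ) : HasDerivAt (fun y : ℝ => Complex.exp (((a*y^2 - s*y : ℝ) : ℂ) * Complex.I))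
    (Complex.exp (((a*x^2 - s*x : ℝ) : ℂ) * Complex.I) * (((2*a*x - s : ℝ) : ℂ) * Complex.I)) x :=
  (((aux_phi s a x).ofReal_comp).mul_const Complex.I).cexp

lemma aux_g (s a α : ℝ) {x : ℝ} (hx : 0 < x) (hd : 2*a*x - s ≠ 0) :
    HasDerivAt (fun y : ℝ => y^α / (2*a*y - s))
      ((α * x^(α-1) * (2*a*x-s) - x^α * (2*a)) / (2*a*x-s)^2) x := by
  have hnum : HasDerivAt (fun y : ℝ => y^α) (α * x^(α-1)) x :=
    Real.hasDerivAt_rpow_const (Or.inl hx.ne')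
  have hden : HasDerivAt (fun y : ℝ => 2*a*y - s) (2*a) x := by
    have := ((hasDerivAt_id x).const_mul (2*a)).sub_const s
    simpa using this
  exact hnum.div hden hd

lemma aux_F (s a α : ℝ) {x : ℝ} (hx : 0 < x) (hd : 2*a*x - s ≠ 0) :
    HasDerivAt (Ffun s a α) (ffun s a α x + hfun s a α x) x := by
  have hg : HasDerivAt (fun y : ℝ => -Complex.I * ((y^α / (2*a*y - s) : ℝ) : ℂ))
      (-Complex.I * (((α * x^(α-1) * (2*a*x-s) - x^α * (2*a)) / (2*a*x-s)^2 : ℝ) : ℂ)) x :=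
    ((aux_g s a α hx hd).ofReal_comp).const_mul (-Complex.I)
  have h := hg.mul (aux_E s a x)
  have hkey : ((x^α / (2*a*x - s) : ℝ) : ℂ) * ((2*a*x - s : ℝ) : ℂ) = ((x^α : ℝ) : ℂ) := by
    rw [← Complex.ofReal_mul, div_mul_cancel₀ _ hd]
  have h2 : -Complex.I * ((x^α / (2*a*x-s) : ℝ):ℂ) *
      (Complex.exp (((a*x^2 - s*x : ℝ) : ℂ) * Complex.I) * (((2*a*x-s:ℝ):ℂ) * Complex.I))
      = ((x^α:ℝ):ℂ) * Complex.exp (((a*x^2 - s*x : ℝ) : ℂ) * Complex.I) := by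
    rw [← hkey]
    linear_combination (-(((x^α / (2*a*x - s) : ℝ) : ℂ) * ((2*a*x - s : ℝ) : ℂ) *
      Complex.exp (((a*x^2 - s*x : ℝ) : ℂ) * Complex.I))) * Complex.I_sq
  show HasDerivAt (fun y : ℝ => -Complex.I * ((y^α / (2*a*y - s) : ℝ) : ℂ) *
      Complex.exp (((a*y^2 - s*y : ℝ) : ℂ) * Complex.I)) _ x
  convert h using 1
  show ffun s a α x + hfun s a α x = _
  rw [ffun, hfun, h2]
  ring
  all_goals rfl

lemma cont_ffun (s a α : ℝ) : ContinuousOn (ffun s a α) {x : ℝ | 0 < x} := by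
  have hc1 : ContinuousOn (fun x : ℝ => ((x^α : ℝ):ℂ)) {x : ℝ | 0 < x} :=
    Complex.continuous_ofReal.comp_continuousOn
      (continuousOn_id.rpow_const (fun x hx => Or.inl (ne_of_gt hx)))
  have hc2 : Continuous (fun x : ℝ => Complex.exp (((a*x^2 - s*x : ℝ):ℂ) * Complex.I)) := by
    fun_prop
  exact hc1.mul hc2.continuousOn

lemma cont_hfun (s a α : ℝ) : ContinuousOn (hfun s a α)
    {x : ℝ | 0 < x ∧ 2*a*x - s ≠ 0} := by
  have hr1 : ContinuousOn (fun x : ℝ => x^(α-1)) {x : ℝ | 0 < x ∧ 2*a*x - s ≠ 0} :=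
    continuousOn_id.rpow_const (fun x (hx : 0 < x ∧ 2*a*x - s ≠ 0) => Or.inl (ne_of_gt hx.1))
  have hr2 : ContinuousOn (fun x : ℝ => x^α) {x : ℝ | 0 < x ∧ 2*a*x - s ≠ 0} :=
    continuousOn_id.rpow_const (fun x (hx : 0 < x ∧ 2*a*x - s ≠ 0) => Or.inl (ne_of_gt hx.1))
  have hnum : ContinuousOn (fun x : ℝ => α * x^(α-1) * (2*a*x-s) - x^α * (2*a))
      {x : ℝ | 0 < x ∧ 2*a*x - s ≠ 0} :=
    ((continuousOn_const.mul hr1).mul (by fun_prop)).sub (hr2.mul continuousOn_const)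
  have hden : ContinuousOn (fun x : ℝ => (2*a*x-s)^2) {x : ℝ | 0 < x ∧ 2*a*x - s ≠ 0} := by
    fun_prop
  have hdiv : ContinuousOn (fun x : ℝ => (α * x^(α-1) * (2*a*x-s) - x^α * (2*a)) / (2*a*x-s)^2)
      {x : ℝ | 0 < x ∧ 2*a*x - s ≠ 0} :=
    hnum.div hden (fun x hx => pow_ne_zero _ hx.2)
  exact ((continuousOn_const.mul
    (Complex.continuous_ofReal.comp_continuousOn hdiv))).mul (by fun_prop)

lemma norm_helper1 (r t : ℝ) : ‖((r:ℝ):ℂ) * Complex.exp (((t:ℝ):ℂ) * Complex.I)‖ = |r| := by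
  simp [map_mul, Complex.norm_exp_ofReal_mul_I, Complex.norm_real]

lemma norm_helper2 (r t : ℝ) :
    ‖-Complex.I * ((r:ℝ):ℂ) * Complex.exp (((t:ℝ):ℂ) * Complex.I)‖ = |r| := by
  simp [map_mul, Complex.norm_exp_ofReal_mul_I, Complex.norm_real]

lemma norm_ffun (s a α : ℝ) (x : ℝ) : ‖ffun s a α x‖ = |x ^ α| := norm_helper1 _ _

lemma norm_hfun (s a α : ℝ) (x : ℝ) :
    ‖hfun s a α x‖ = |(α * x^(α-1) * (2*a*x-s) - x^α * (2*a)) / (2*a*x-s)^2| := norm_helper2 _ _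

lemma norm_Ffun (s a α : ℝ) (x : ℝ) : ‖Ffun s a α x‖ = |x^α / (2*a*x - s)| := norm_helper2 _ _

lemma hfun_bound (s a α : ℝ) (ha : 0 < a) {x : ℝ} (hx1 : 1 ≤ x) (hd : a * x ≤ 2*a*x - s) :
    ‖hfun s a α x‖ ≤ ((|α| + 2) / a) * x ^ (α - 2) := by
  have hx : (0:ℝ) < x := lt_of_lt_of_le one_pos hx1
  have hax : 0 < a * x := mul_pos ha hx
  have hd0 : 0 < 2*a*x - s := lt_of_lt_of_le hax hd
  have hxa2 : (0:ℝ) ≤ x ^ (α - 2) := Real.rpow_nonneg hx.le _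
  have e1 : x^(α-1) = x^(α-2) * x := by
    rw [show α-1 = (α-2)+1 by ring, Real.rpow_add hx, Real.rpow_one]
  have e2 : x^α = x^(α-2) * x * x := by
    rw [show α = ((α-2)+1)+1 by ring, Real.rpow_add hx, Real.rpow_add hx, Real.rpow_one]
    ring_nf
  have hstep : |α * x^(α-1) * (2*a*x-s) - x^α * (2*a)| ≤
      |α| * x^(α-1) * (2*a*x-s) + x^α * (2*a) := by
    refine (abs_sub _ _).trans (le_of_eq ?_)
    rw [abs_mul, abs_mul, abs_mul, _root_.abs_of_nonneg (Real.rpow_nonneg hx.le (α-1)),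
      _root_.abs_of_pos hd0, _root_.abs_of_nonneg (Real.rpow_nonneg hx.le α),
      _root_.abs_of_pos (by linarith : (0:ℝ) < 2*a)]
  have B1 : |α * x^(α-1) * (2*a*x-s) - x^α * (2*a)| ≤
      x^(α-2) * (|α| * x * (2*a*x-s) + 2*a*x^2) := by
    refine hstep.trans (le_of_eq ?_)
    rw [e1, e2]; ring
  have h1 : 0 ≤ |α| * (2*a*x-s) * ((2*a*x-s) - a*x) :=
    mul_nonneg (mul_nonneg (abs_nonneg _) hd0.le) (by linarith)
  have h2 : 0 ≤ 2 * ((2*a*x-s) - a*x) * ((2*a*x-s) + a*x) :=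
    mul_nonneg (mul_nonneg (by norm_num) (by linarith)) (by linarith)
  have hmain : a * (|α| * x * (2*a*x-s) + 2*a*x^2) ≤ (|α|+2) * (2*a*x-s)^2 := by nlinarith
  rw [norm_hfun, _root_.abs_div, _root_.abs_of_nonneg (sq_nonneg (2*a*x-s)),
    div_le_iff₀ (by positivity : (0:ℝ) < (2*a*x-s)^2), div_mul_eq_mul_div, div_mul_eq_mul_div,
    le_div_iff₀ ha]
  have habs : 0 ≤ |α * x^(α-1) * (2*a*x-s) - x^α * (2*a)| := abs_nonneg _
  nlinarith [mul_le_mul_of_nonneg_right B1 ha.le,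
    mul_le_mul_of_nonneg_left hmain hxa2]

theorem stmt12 (s a α : ℝ) (ha : 0 < a) (hα : |α| < 1) :
    ∃ L : ℂ, Tendsto
      (fun R : ℝ => ∫ x in (0:ℝ)..R,
        ((x ^ α : ℝ) : ℂ) * Complex.exp (((a * x ^ 2 - s * x : ℝ) : ℂ) * Complex.I))
      atTop (nhds L) := by
  obtain ⟨hα1, hα2⟩ := abs_lt.mp hα
  set T : ℝ := max 1 (s/a + 1) with hT
  have hT1 : (1:ℝ) ≤ T := le_max_left _ _
  have hT0 : (0:ℝ) < T := lt_of_lt_of_le one_pos hT1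
  have hdge : ∀ x : ℝ, T ≤ x → a * x ≤ 2*a*x - s := by
    intro x hx
    have hx' : s/a + 1 ≤ x := le_trans (le_max_right _ _) hx
    have := mul_le_mul_of_nonneg_left hx' ha.le
    rw [mul_add, mul_div_cancel₀ _ ha.ne', mul_one] at this
    linarith
  have hd0 : ∀ x : ℝ, T ≤ x → 0 < 2*a*x - s := fun x hx =>
    lt_of_lt_of_le (mul_pos ha (lt_of_lt_of_le hT0 hx)) (hdge x hx)
  have hint0T : IntervalIntegrable (ffun s a α) volume 0 T := by
    refine (intervalIntegral.intervalIntegrable_rpow' (by linarith : (-1:ℝ) < α)).mono_fun ?_ ?_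
    · have : Set.uIoc (0:ℝ) T = Set.Ioc 0 T := Set.uIoc_of_le hT0.le
      rw [this]
      exact ((cont_ffun s a α).mono (fun x hx => hx.1)).aestronglyMeasurable measurableSet_Ioc
    · filter_upwards with x
      rw [norm_ffun, Real.norm_eq_abs]
  have hsubIci : Set.Ici T ⊆ {x : ℝ | 0 < x ∧ 2*a*x - s ≠ 0} := fun x hx =>
    ⟨lt_of_lt_of_le hT0 hx, (hd0 x hx).ne'⟩
  have hIntIoi : MeasureTheory.IntegrableOn (hfun s a α) (Set.Ioi T) := by
    have hmaj : MeasureTheory.IntegrableOn (fun x : ℝ => ((|α|+2)/a) * x ^ (α-2)) (Set.Ioi T) :=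
      (integrableOn_Ioi_rpow_of_lt (by linarith) hT0).const_mul _
    refine hmaj.mono' ?_ ?_
    · exact ((cont_hfun s a α).mono (Set.Ioi_subset_Ici_self.trans hsubIci)).aestronglyMeasurable
        measurableSet_Ioi
    · rw [MeasureTheory.ae_restrict_iff' measurableSet_Ioi]
      filter_upwards with x hx
      exact hfun_bound s a α ha (le_trans hT1 (le_of_lt hx)) (hdge x (le_of_lt hx))
  have hFtend : Tendsto (Ffun s a α) atTop (𝓝 0) := by
    apply squeeze_zero_norm' (a := fun R : ℝ => a⁻¹ * R ^ (-(1-α)))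
    · filter_upwards [eventually_ge_atTop T] with R hR
      have hR0 : (0:ℝ) < R := lt_of_lt_of_le hT0 hR
      have hd0R := hd0 R hR
      rw [norm_Ffun, _root_.abs_div, _root_.abs_of_nonneg (Real.rpow_nonneg hR0.le _),
        _root_.abs_of_pos hd0R]
      have step1 : R^α / (2*a*R - s) ≤ R^α / (a*R) := by
        gcongr
        exact hdge R hR
      refine step1.trans (le_of_eq ?_)
      rw [show -(1-α) = α - 1 by ring, Real.rpow_sub hR0, Real.rpow_one]
      field_simp
    · have := (tendsto_rpow_neg_atTop (by linarith : (0:ℝ) < 1 - α)).const_mul a⁻¹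
      simpa using this
  have hIoiT : Tendsto (fun R : ℝ => ∫ x in T..R, hfun s a α x) atTop
      (𝓝 (∫ x in Set.Ioi T, hfun s a α x)) :=
    MeasureTheory.intervalIntegral_tendsto_integral_Ioi T hIntIoi tendsto_id
  refine ⟨(∫ x in (0:ℝ)..T, ffun s a α x) +
    (0 - Ffun s a α T - ∫ x in Set.Ioi T, hfun s a α x), ?_⟩
  have htend : Tendsto (fun R : ℝ => (∫ x in (0:ℝ)..T, ffun s a α x) +
      (Ffun s a α R - Ffun s a α T - ∫ x in T..R, hfun s a α x)) atTop
      (𝓝 ((∫ x in (0:ℝ)..T, ffun s a α x) +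
        (0 - Ffun s a α T - ∫ x in Set.Ioi T, hfun s a α x))) :=
    tendsto_const_nhds.add (((hFtend.sub_const _)).sub hIoiT)
  refine htend.congr' ?_
  filter_upwards [eventually_ge_atTop T] with R hR
  have hsub : Set.uIcc T R ⊆ {x : ℝ | 0 < x ∧ 2*a*x - s ≠ 0} := by
    rw [Set.uIcc_of_le hR]
    exact (Set.Icc_subset_Ici_self).trans hsubIci
  have hsub' : Set.uIcc T R ⊆ {x : ℝ | 0 < x} := fun x hx => (hsub hx).1
  have hfint : IntervalIntegrable (ffun s a α) volume T R :=
    ((cont_ffun s a α).mono hsub').intervalIntegrable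
  have hhint : IntervalIntegrable (hfun s a α) volume T R :=
    ((cont_hfun s a α).mono hsub).intervalIntegrable
  have hderivR : ∀ x ∈ Set.uIcc T R, HasDerivAt (Ffun s a α) (ffun s a α x + hfun s a α x) x :=
    fun x hx => aux_F s a α (hsub hx).1 (hsub hx).2
  have hFTC : ∫ x in T..R, (ffun s a α x + hfun s a α x) = Ffun s a α R - Ffun s a α T :=
    intervalIntegral.integral_eq_sub_of_hasDerivAt hderivR (hfint.add hhint)
  rw [intervalIntegral.integral_add hfint hhint] at hFTC
  have hadd : (∫ x in (0:ℝ)..T, ffun s a α x) + ∫ x in T..R, ffun s a α x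
      = ∫ x in (0:ℝ)..R, ffun s a α x :=
    intervalIntegral.integral_add_adjacent_intervals hint0T hfint
  show (∫ x in (0:ℝ)..T, ffun s a α x) +
      (Ffun s a α R - Ffun s a α T - ∫ x in T..R, hfun s a α x)
      = ∫ x in (0:ℝ)..R, ffun s a α x
  rw [← hadd, ← hFTC]
  ring
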